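/- Let n ≥ 1 be an integer, let μ, η ∈ ℂ with |μ| = |η| = 1, let φ : 𝔻 → 𝔻 be analytic, and let ψ be analytic on 𝔻 and not identically zero. Suppose that for all z, w ∈ 𝔻, μ·ψ(z)·∑_{k=n}^∞ (k!/(k-n)!)·δ_k·(ηw)^k·φ(z)^{k-n} = μ·ψ(w)·∑_{k=n}^∞ (k!/(k-n)!)·δ_k·(ηz)^k·φ(w)^{k-n}. Then, with b = φ(0), there exist a, c ∈ ℂ such that for all z ∈ 𝔻: ψ(z) = (a/(n!·δ_n))·F₁(z), and φ(z)·F₁(z) = b·F₁(z) + c·((n+3)/(n+1)²)·F₂(z), where F₁(z) = ∑_{k=n}^∞ (k!/(k-n)!)·δ_k·(ηb)^{k-n}·z^k and F₂(z) = ∑_{k=n+1}^∞ (k!/(k-n-1)!)·δ_k·(ηb)^{k-n-1}·z^k. -/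

import Mathlib

open ComplexConjugate

/-- `δ_k = 2/((k+1)(k+2))`, the coefficients of the reproducing kernel of the
derivative Hardy space `S²₁(𝔻)`. -/
noncomputable def hardyDelta (k : ℕ) : ℂ := 2 / (((k : ℂ) + 1) * ((k : ℂ) + 2))

/-- `F₁(z) = ∑_{k=n}^∞ (k!/(k-n)!) δ_k u^{k-n} z^k` (index shifted by `n`),
with `u = ηb`. -/
noncomputable def F1 (n : ℕ) (u z : ℂ) : ℂ :=
  ∑' k : ℕ, (Nat.factorial (k + n) : ℂ) / (Nat.factorial k : ℂ) *
    hardyDelta (k + n) * u ^ k * z ^ (k + n)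

/-- `F₂(z) = ∑_{k=n+1}^∞ (k!/(k-n-1)!) δ_k u^{k-n-1} z^k` (index shifted by `n+1`),
with `u = ηb`. -/
noncomputable def F2 (n : ℕ) (u z : ℂ) : ℂ :=
  ∑' k : ℕ, (Nat.factorial (k + n + 1) : ℂ) / (Nat.factorial k : ℂ) *
    hardyDelta (k + n + 1) * u ^ k * z ^ (k + n + 1)


noncomputable def cc (n k : ℕ) : ℂ :=
  (Nat.factorial (k + n) : ℂ) / (Nat.factorial k : ℂ) * hardyDelta (k + n)

noncomputable def gg (n : ℕ) (x : ℂ) : ℂ := ∑' k : ℕ, cc n k * x ^ k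

lemma natc_ne_zero (m : ℕ) (j : ℕ) (hj : 0 < j) : ((m : ℂ) + (j : ℂ)) ≠ 0 := by
  have : (((m + j : ℕ)) : ℂ) ≠ 0 := Nat.cast_ne_zero.mpr (by omega)
  push_cast at this
  exact this

lemma hardyDelta_ne_zero (k : ℕ) : hardyDelta k ≠ 0 := by
  unfold hardyDelta
  have h1 : ((k : ℂ) + 1) ≠ 0 := by
    have := natc_ne_zero k 1 one_pos; push_cast at this ⊢; exact this
  have h2 : ((k : ℂ) + 2) ≠ 0 := by
    have := natc_ne_zero k 2 (by norm_num); push_cast at this ⊢; exact this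
  exact div_ne_zero two_ne_zero (mul_ne_zero h1 h2)

lemma abs_hardyDelta_le_one (k : ℕ) : ‖hardyDelta k‖ ≤ 1 := by
  have : hardyDelta k = ((2 / (((k:ℝ) + 1) * ((k:ℝ) + 2)) : ℝ) : ℂ) := by
    unfold hardyDelta; push_cast; ring
  rw [this, Complex.norm_real, Real.norm_eq_abs, abs_of_nonneg (by positivity)]
  rw [div_le_one (by positivity)]
  nlinarith [Nat.cast_nonneg (α := ℝ) k]

lemma fact_bound (k n : ℕ) : (k + n).factorial ≤ k.factorial * (k + n) ^ n := by
  induction n with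
  | zero => simp
  | succ m ih =>
    have h1 : (k + (m+1)).factorial = (k + m + 1) * (k + m).factorial := by
      rw [show k + (m+1) = (k+m) + 1 by omega, Nat.factorial_succ]
    rw [h1]
    calc (k + m + 1) * (k + m).factorial ≤ (k + m + 1) * (k.factorial * (k + m) ^ m) :=
          Nat.mul_le_mul_left _ ih
      _ ≤ (k + m + 1) * (k.factorial * (k + m + 1) ^ m) := by
          exact Nat.mul_le_mul_left _ (Nat.mul_le_mul_left _ (Nat.pow_le_pow_left (by omega) m))
      _ = k.factorial * (k + (m+1)) ^ (m+1) := by ring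

lemma cc_norm_le (n k : ℕ) : ‖cc n k‖ ≤ (((n:ℝ)+1) * ((k:ℝ)+1)) ^ n := by
  unfold cc
  rw [norm_mul, norm_div, Complex.norm_natCast, Complex.norm_natCast]
  have h1 : ((k+n).factorial : ℝ) / (k.factorial : ℝ) ≤ ((k:ℝ) + (n:ℝ)) ^ n := by
    rw [div_le_iff₀ (by positivity)]
    calc ((k+n).factorial : ℝ) ≤ (k.factorial : ℝ) * ((k+n : ℕ) : ℝ) ^ n := by
          exact_mod_cast Nat.cast_le.mpr (fact_bound k n)
      _ = ((k:ℝ) + (n:ℝ)) ^ n * (k.factorial : ℝ) := by push_cast; ring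
  calc ((k+n).factorial : ℝ) / (k.factorial : ℝ) * ‖hardyDelta (k+n)‖
      ≤ ((k:ℝ) + (n:ℝ)) ^ n * 1 := by
        apply mul_le_mul h1 (abs_hardyDelta_le_one _) (by positivity) (by positivity)
    _ ≤ (((n:ℝ)+1) * ((k:ℝ)+1)) ^ n := by
        rw [mul_one]
        apply pow_le_pow_left₀ (by positivity)
        nlinarith [Nat.cast_nonneg (α := ℝ) k, Nat.cast_nonneg (α := ℝ) n]

-- summability of (k+1)^p r^k
lemma summable_aux (p : ℕ) {r : ℝ} (hr0 : 0 ≤ r) (hr : r < 1) :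
    Summable (fun k : ℕ => ((k:ℝ)+1) ^ p * r ^ k) := by
  have h : Summable (fun k : ℕ => (k:ℝ) ^ p * r ^ k) :=
    summable_pow_mul_geometric_of_norm_lt_one p (by rwa [Real.norm_eq_abs, abs_of_nonneg hr0])
  rcases eq_or_lt_of_le hr0 with h0 | h0
  · apply summable_of_ne_finset_zero (s := {0})
    intro k hk
    simp only [Finset.mem_singleton] at hk
    rw [← h0, zero_pow hk, mul_zero]
  · have h2 : Summable (fun k : ℕ => (((k+1:ℕ)):ℝ) ^ p * r ^ (k+1)) :=
      (summable_nat_add_iff 1).mpr h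
    have h3 := h2.mul_left (1/r)
    apply h3.congr
    intro k
    push_cast
    field_simp
    ring

lemma summable_shifted (p : ℕ) {r : ℝ} (hr0 : 0 ≤ r) (hr : r < 1) :
    Summable (fun k : ℕ => ((k:ℝ)+2) ^ p * r ^ k) := by
  have hb : Summable (fun k : ℕ => 2^p * (((k:ℝ)+1)^p * r^k)) :=
    (summable_aux p hr0 hr).mul_left _
  refine Summable.of_nonneg_of_le (fun k => by positivity) (fun k => ?_) hb
  have h1 : ((k:ℝ)+2) ^ p ≤ (2*((k:ℝ)+1)) ^ p := by
    apply pow_le_pow_left₀ (by positivity)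
    nlinarith [Nat.cast_nonneg (α := ℝ) k]
  calc ((k:ℝ)+2)^p * r^k ≤ (2*((k:ℝ)+1))^p * r^k := by
        apply mul_le_mul_of_nonneg_right h1 (by positivity)
    _ = 2^p * (((k:ℝ)+1)^p * r^k) := by rw [mul_pow]; ring

lemma summable_main (p : ℕ) {r : ℝ} (hr0 : 0 ≤ r) (hr : r < 1) :
    Summable (fun k : ℕ => ((k:ℝ)+1) ^ p * r ^ (k-1)) := by
  apply (summable_nat_add_iff 1).mp
  have := summable_shifted p hr0 hr
  apply this.congr
  intro k
  push_cast
  ring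

lemma nat_cast_succ_ne (k : ℕ) : ((k:ℂ)+1) ≠ 0 := by
  have := natc_ne_zero k 1 one_pos; push_cast at this ⊢; exact this

lemma cc_succ (n k : ℕ) : cc n (k+1) * ((k:ℂ)+1) = cc (n+1) k := by
  unfold cc
  have h1 : k + 1 + n = k + (n+1) := by omega
  rw [h1]
  have hf : ((k+1).factorial : ℂ) = ((k:ℂ)+1) * (k.factorial : ℂ) := by
    rw [Nat.factorial_succ]; push_cast; ring
  rw [hf]
  have h2 : ((k:ℂ)+1) ≠ 0 := nat_cast_succ_ne k
  have h3 : ((k.factorial : ℂ)) ≠ 0 := Nat.cast_ne_zero.mpr k.factorial_ne_zero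
  field_simp

lemma mem_ball_iff_abs {r : ℝ} {x : ℂ} : x ∈ Metric.ball (0:ℂ) r ↔ ‖x‖ < r := by
  simp [Metric.mem_ball, Complex.dist_eq]

lemma gg_hasDerivAt (n : ℕ) {x : ℂ} (hx : ‖x‖ < 1) :
    HasDerivAt (gg n) (gg (n+1) x) x := by
  have habs0 : 0 ≤ ‖x‖ := norm_nonneg x
  set r : ℝ := (‖x‖ + 1)/2 with hrdef
  have hxr : ‖x‖ < r := by rw [hrdef]; linarith
  have hr0 : 0 < r := by rw [hrdef]; linarith
  have hr1 : r < 1 := by rw [hrdef]; linarith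
  set u : ℕ → ℝ := fun k => (((n:ℝ)+1) * ((k:ℝ)+1))^n * (((k:ℝ)+1) * r^(k-1)) with hu
  have hu_sum : Summable u := by
    have h := (summable_main (n+1) hr0.le hr1).mul_left ((((n:ℝ)+1))^n)
    apply h.congr
    intro k
    rw [hu]
    simp only
    rw [mul_pow, pow_succ]
    ring
  have hder : ∀ k (y:ℂ), y ∈ Metric.ball (0:ℂ) r →
      HasDerivAt (fun y : ℂ => cc n k * y^k) (cc n k * ((k:ℂ) * y^(k-1))) y :=
    fun k y _ => (hasDerivAt_pow k y).const_mul _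
  have hbound : ∀ k (y:ℂ), y ∈ Metric.ball (0:ℂ) r →
      ‖cc n k * ((k:ℂ) * y^(k-1))‖ ≤ u k := by
    intro k y hy
    have hyr : ‖y‖ < r := mem_ball_iff_abs.mp hy
    rw [norm_mul, norm_mul, norm_pow, Complex.norm_natCast]
    rw [hu]
    simp only
    have e1 : ‖cc n k‖ ≤ (((n:ℝ)+1) * ((k:ℝ)+1))^n := cc_norm_le n k
    have e2 : (k:ℝ) ≤ (k:ℝ)+1 := by linarith
    have e3 : (‖y‖)^(k-1) ≤ r^(k-1) := pow_le_pow_left₀ (norm_nonneg y) hyr.le _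
    have e4 : (k:ℝ) * (‖y‖)^(k-1) ≤ ((k:ℝ)+1) * r^(k-1) := by
      apply mul_le_mul e2 e3 (by positivity) (by positivity)
    apply mul_le_mul e1 e4 (by positivity) (by positivity)
  have h0 : Summable (fun k : ℕ => cc n k * (0:ℂ)^k) := by
    apply summable_of_ne_finset_zero (s := {0})
    intro k hk
    simp only [Finset.mem_singleton] at hk
    rw [zero_pow hk, mul_zero]
  have hxball : x ∈ Metric.ball (0:ℂ) r := mem_ball_iff_abs.mpr hxr
  have H := hasDerivAt_tsum_of_isPreconnected hu_sum Metric.isOpen_ball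
    (convex_ball (0:ℂ) r).isPreconnected hder hbound (Metric.mem_ball_self hr0) h0 hxball
  have hsum' : Summable (fun k => cc n k * ((k:ℂ) * x^(k-1))) :=
    Summable.of_norm_bounded hu_sum (fun k => hbound k x hxball)
  have heq2 : (∑' k : ℕ, cc n k * ((k:ℂ) * x^(k-1))) = gg (n+1) x := by
    rw [Summable.tsum_eq_zero_add hsum']
    have hz : cc n 0 * ((0:ℕ):ℂ) * (x:ℂ)^(0-1) = 0 := by simp
    simp only [Nat.cast_zero, zero_mul, mul_zero, zero_add]
    unfold gg
    apply tsum_congr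
    intro k
    have : cc n (k+1) * (((k+1:ℕ):ℂ) * x^(k+1-1)) = (cc n (k+1) * ((k:ℂ)+1)) * x^k := by
      push_cast; ring_nf
    rw [this, cc_succ]
  rw [← heq2]
  exact H

lemma gg_zero (n : ℕ) : gg n 0 = (Nat.factorial n : ℂ) * hardyDelta n := by
  unfold gg
  rw [tsum_eq_single 0 (fun k hk => by rw [zero_pow hk, mul_zero])]
  unfold cc
  simp [Nat.factorial]

lemma gg_zero_ne (n : ℕ) : gg n 0 ≠ 0 := by
  rw [gg_zero]
  exact mul_ne_zero (Nat.cast_ne_zero.mpr n.factorial_ne_zero) (hardyDelta_ne_zero n)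

lemma gg_continuousAt (n : ℕ) {x : ℂ} (hx : ‖x‖ < 1) : ContinuousAt (gg n) x :=
  (gg_hasDerivAt n hx).continuousAt

lemma gg_ne_zero_ball (n : ℕ) : ∃ r : ℝ, 0 < r ∧ r ≤ 1 ∧
    ∀ x : ℂ, ‖x‖ < r → gg n x ≠ 0 := by
  have hc : ContinuousAt (gg n) 0 := gg_continuousAt n (by simp)
  have hev : ∀ᶠ x in nhds (0:ℂ), gg n x ≠ 0 := hc.eventually_ne (gg_zero_ne n)
  rw [Metric.eventually_nhds_iff] at hev
  obtain ⟨ε, hε, hball⟩ := hev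
  refine ⟨min ε 1, lt_min hε one_pos, min_le_right _ _, fun x hx => ?_⟩
  apply hball
  rw [Complex.dist_eq, sub_zero]
  exact lt_of_lt_of_le hx (min_le_left _ _)

lemma F1_eq (n : ℕ) (u z : ℂ) : F1 n u z = z^n * gg n (u*z) := by
  unfold F1 gg cc
  rw [← tsum_mul_left]
  apply tsum_congr
  intro k
  rw [mul_pow, pow_add]
  ring

lemma F2_eq (n : ℕ) (u z : ℂ) : F2 n u z = z^(n+1) * gg (n+1) (u*z) := by
  unfold F2 gg cc
  rw [← tsum_mul_left]
  apply tsum_congr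
  intro k
  simp only [← Nat.add_assoc]
  rw [mul_pow, pow_add]
  ring

lemma ker_eq (n : ℕ) (η w v : ℂ) :
    (∑' k : ℕ, (Nat.factorial (k + n) : ℂ) / (Nat.factorial k : ℂ) *
      hardyDelta (k + n) * (η * w) ^ (k + n) * v ^ k)
      = η^n * (w^n * gg n (η * w * v)) := by
  unfold gg cc
  rw [← mul_assoc, ← tsum_mul_left]
  apply tsum_congr
  intro k
  rw [mul_pow, mul_pow, mul_pow, pow_add, pow_add]
  ring

lemma kappa_eq (n : ℕ) : (Nat.factorial n : ℂ) * hardyDelta n =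
    (((n:ℂ)+3)/((n:ℂ)+1)^2) * ((Nat.factorial (n+1) : ℂ) * hardyDelta (n+1)) := by
  unfold hardyDelta
  have h1 : ((n:ℂ)+1) ≠ 0 := nat_cast_succ_ne n
  have h2 : ((n:ℂ)+2) ≠ 0 := by have := natc_ne_zero n 2 (by norm_num); push_cast at this; exact this
  have h3 : ((n:ℂ)+3) ≠ 0 := by have := natc_ne_zero n 3 (by norm_num); push_cast at this; exact this
  have h2' : (n:ℂ)+1+1 ≠ 0 := by rw [show (n:ℂ)+1+1 = (n:ℂ)+2 by ring]; exact h2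
  have h3' : (n:ℂ)+1+2 ≠ 0 := by rw [show (n:ℂ)+1+2 = (n:ℂ)+3 by ring]; exact h3
  push_cast [Nat.factorial_succ]
  field_simp
  ring
set_option maxHeartbeats 1000000 in
/-- Theorem 2.5 (forward direction): if the reproducing-kernel identity for
complex symmetry of `D_{n,ψ,φ}` with conjugation `C_{μ,η}` holds on the
derivative Hardy space `S²₁(𝔻)`, then, with `b = φ(0)`, there exist `a, c ∈ ℂ`
with `ψ = (a/(n!δ_n))F₁` and `φ·F₁ = b·F₁ + c((n+3)/(n+1)²)F₂` on the disk. -/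
theorem stmt12 (n : ℕ) (hn : 1 ≤ n) (μ η : ℂ)
    (hμ : ‖μ‖ = 1) (hη : ‖η‖ = 1)
    (φ ψ : ℂ → ℂ)
    (hφ : DifferentiableOn ℂ φ (Metric.ball (0 : ℂ) 1))
    (hφmap : ∀ z ∈ Metric.ball (0 : ℂ) 1, φ z ∈ Metric.ball (0 : ℂ) 1)
    (hψ : DifferentiableOn ℂ ψ (Metric.ball (0 : ℂ) 1))
    (hψne : ∃ z ∈ Metric.ball (0 : ℂ) 1, ψ z ≠ 0)
    (heq : ∀ z ∈ Metric.ball (0 : ℂ) 1, ∀ w ∈ Metric.ball (0 : ℂ) 1,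
      μ * ψ z * ∑' k : ℕ, (Nat.factorial (k + n) : ℂ) / (Nat.factorial k : ℂ) *
          hardyDelta (k + n) * (η * w) ^ (k + n) * (φ z) ^ k
        = μ * ψ w * ∑' k : ℕ, (Nat.factorial (k + n) : ℂ) / (Nat.factorial k : ℂ) *
            hardyDelta (k + n) * (η * z) ^ (k + n) * (φ w) ^ k) :
    ∃ a c : ℂ, ∀ z ∈ Metric.ball (0 : ℂ) 1,
      ψ z = a / ((Nat.factorial n : ℂ) * hardyDelta n) * F1 n (η * φ 0) z ∧
      φ z * F1 n (η * φ 0) z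
        = φ 0 * F1 n (η * φ 0) z +
            c * (((n : ℂ) + 3) / ((n : ℂ) + 1) ^ 2) * F2 n (η * φ 0) z := by
  have hμ0 : μ ≠ 0 := fun h => by simp [h] at hμ
  have hη0 : η ≠ 0 := fun h => by simp [h] at hη
  have hb1 : ‖φ 0‖ < 1 := mem_ball_iff_abs.mp (hφmap 0 (by simp))
  have hball0 : Metric.ball (0:ℂ) 1 ∈ nhds (0:ℂ) := Metric.ball_mem_nhds 0 one_pos
  have hφ0 : DifferentiableAt ℂ φ 0 := hφ.differentiableAt hball0
  have hφc : ContinuousAt φ 0 := hφ0.continuousAt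
  have hφd : HasDerivAt φ (deriv φ 0) 0 := hφ0.hasDerivAt
  have habs : ∀ {w v : ℂ}, ‖w‖ < 1 → ‖v‖ < 1 →
      ‖η * w * v‖ < 1 := by
    intro w v hw hv
    rw [norm_mul, norm_mul, hη, one_mul]
    nlinarith [norm_nonneg w, norm_nonneg v]
  have key : ∀ z ∈ Metric.ball (0:ℂ) 1, ∀ w ∈ Metric.ball (0:ℂ) 1,
      ψ z * (w^n * gg n (η*w*φ z)) = ψ w * (z^n * gg n (η*z*φ w)) := by
    intro z hz w hw
    have h := heq z hz w hw
    rw [ker_eq, ker_eq] at h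
    have hc : (μ * η^n) ≠ 0 := mul_ne_zero hμ0 (pow_ne_zero _ hη0)
    apply mul_left_cancel₀ hc
    linear_combination h
  obtain ⟨r, hr0, hr1, hrne⟩ := gg_ne_zero_ball n
  set z₀ : ℂ := ((r/2 : ℝ) : ℂ) with hz₀def
  have hz₀abs : ‖z₀‖ = r/2 := by
    rw [hz₀def, Complex.norm_real, Real.norm_eq_abs, abs_of_pos (by linarith)]
  have hz₀ne : z₀ ≠ 0 := by
    intro h
    rw [h] at hz₀abs
    simp at hz₀abs
    linarith
  have hz₀B : z₀ ∈ Metric.ball (0:ℂ) 1 := mem_ball_iff_abs.mpr (by rw [hz₀abs]; linarith)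
  have hz₀lt : ‖z₀‖ < r := by rw [hz₀abs]; linarith
  have hargr : ∀ {v : ℂ}, ‖v‖ < 1 → gg n (η * z₀ * v) ≠ 0 := by
    intro v hv
    apply hrne
    rw [norm_mul, norm_mul, hη, one_mul]
    nlinarith [norm_nonneg z₀, norm_nonneg v]
  set α : ℂ := ψ z₀ * gg n 0 / (z₀^n * gg n (η * z₀ * φ 0)) with hα
  have hden : z₀^n * gg n (η * z₀ * φ 0) ≠ 0 :=
    mul_ne_zero (pow_ne_zero _ hz₀ne) (hargr hb1)
  have hlim : Filter.Tendsto (fun w => ψ w / w^n)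
      (nhdsWithin (0:ℂ) {(0:ℂ)}ᶜ) (nhds α) := by
    have t1 : Filter.Tendsto (fun w : ℂ => η * w * φ z₀) (nhds 0) (nhds 0) := by
      have hcont : Continuous (fun w : ℂ => η * w * φ z₀) := by continuity
      have h := hcont.tendsto 0
      simpa using h
    have t2 : Filter.Tendsto (fun w : ℂ => ψ z₀ * gg n (η * w * φ z₀)) (nhds 0)
        (nhds (ψ z₀ * gg n 0)) :=
      tendsto_const_nhds.mul ((gg_continuousAt n (by simp)).tendsto.comp t1)
    have t3 : Filter.Tendsto (fun w : ℂ => η * z₀ * φ w) (nhds 0)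
        (nhds (η * z₀ * φ 0)) := tendsto_const_nhds.mul hφc
    have t4 : Filter.Tendsto (fun w : ℂ => z₀^n * gg n (η * z₀ * φ w)) (nhds 0)
        (nhds (z₀^n * gg n (η * z₀ * φ 0))) :=
      tendsto_const_nhds.mul
        ((gg_continuousAt n (habs (by rw [hz₀abs]; linarith) hb1)).tendsto.comp t3)
    have t5 : Filter.Tendsto
        (fun w : ℂ => ψ z₀ * gg n (η * w * φ z₀) / (z₀^n * gg n (η * z₀ * φ w)))
        (nhds 0) (nhds α) := by
      rw [hα]
      exact t2.div t4 hden
    apply Filter.Tendsto.congr' _ (t5.mono_left nhdsWithin_le_nhds)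
    filter_upwards [self_mem_nhdsWithin, mem_nhdsWithin_of_mem_nhds hball0] with w hw0 hwB
    have hw0' : w ≠ 0 := hw0
    have k := key z₀ hz₀B w hwB
    have hzden : z₀^n * gg n (η * z₀ * φ w) ≠ 0 :=
      mul_ne_zero (pow_ne_zero _ hz₀ne) (hargr (mem_ball_iff_abs.mp (hφmap w hwB)))
    rw [div_eq_div_iff hzden (pow_ne_zero n hw0')]
    linear_combination k
  have step4 : ∀ z ∈ Metric.ball (0:ℂ) 1,
      ψ z * gg n 0 = α * (z^n * gg n (η * φ 0 * z)) := by
    intro z hz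
    have hzB := mem_ball_iff_abs.mp hz
    have t1 : Filter.Tendsto (fun w : ℂ => η * w * φ z) (nhds 0) (nhds 0) := by
      have hcont : Continuous (fun w : ℂ => η * w * φ z) := by continuity
      have h := hcont.tendsto 0
      simpa using h
    have L : Filter.Tendsto (fun w : ℂ => ψ z * gg n (η * w * φ z))
        (nhdsWithin (0:ℂ) {(0:ℂ)}ᶜ) (nhds (ψ z * gg n 0)) :=
      (tendsto_const_nhds.mul ((gg_continuousAt n (by simp)).tendsto.comp t1)).mono_left
        nhdsWithin_le_nhds
    have t3 : Filter.Tendsto (fun w : ℂ => η * z * φ w) (nhds 0)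
        (nhds (η * z * φ 0)) := tendsto_const_nhds.mul hφc
    have R : Filter.Tendsto (fun w : ℂ => (ψ w / w^n) * (z^n * gg n (η * z * φ w)))
        (nhdsWithin (0:ℂ) {(0:ℂ)}ᶜ) (nhds (α * (z^n * gg n (η * z * φ 0)))) :=
      hlim.mul ((tendsto_const_nhds.mul
        ((gg_continuousAt n (habs hzB hb1)).tendsto.comp t3)).mono_left nhdsWithin_le_nhds)
    have E : (fun w : ℂ => ψ z * gg n (η*w*φ z))
        =ᶠ[nhdsWithin (0:ℂ) {(0:ℂ)}ᶜ]
        (fun w : ℂ => (ψ w / w^n) * (z^n * gg n (η*z*φ w))) := by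
      filter_upwards [self_mem_nhdsWithin, mem_nhdsWithin_of_mem_nhds hball0] with w hw0 hwB
      have hw0' : w ≠ 0 := hw0
      have k := key z hz w hwB
      have hwn : (w:ℂ)^n ≠ 0 := pow_ne_zero _ hw0'
      field_simp
      linear_combination k
    have huniq := tendsto_nhds_unique L (R.congr' E.symm)
    rw [huniq, show η*z*φ 0 = η*φ 0*z from by ring]
  have hα0 : α ≠ 0 := by
    intro h
    obtain ⟨z1, hz1, hz1ne⟩ := hψne
    have h4 := step4 z1 hz1
    rw [h, zero_mul] at h4
    exact hz1ne ((mul_eq_zero.mp h4).resolve_right (gg_zero_ne n))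
  have step7 : ∀ z ∈ Metric.ball (0:ℂ) 1, z ≠ 0 → ∀ w ∈ Metric.ball (0:ℂ) 1,
      gg n (η*φ 0*z) * gg n (η*w*φ z) = gg n (η*φ 0*w) * gg n (η*z*φ w) := by
    intro z hz hzne w hw
    by_cases hwne : w = 0
    · subst hwne
      rw [show η*(0:ℂ)*φ z = 0 from by ring, show η*φ 0*(0:ℂ) = 0 from by ring,
        show η*z*φ 0 = η*φ 0*z from by ring]
      ring
    · have k := key z hz w hw
      have e1 := step4 z hz
      have e2 := step4 w hw
      have hcan : α * (z^n * w^n) ≠ 0 :=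
        mul_ne_zero hα0 (mul_ne_zero (pow_ne_zero _ hzne) (pow_ne_zero _ hwne))
      apply mul_left_cancel₀ hcan
      linear_combination gg n 0 * k - (w^n * gg n (η*w*φ z)) * e1
        + (z^n * gg n (η*z*φ w)) * e2
  refine ⟨α, deriv φ 0, fun z hz => ?_⟩
  have hzB := mem_ball_iff_abs.mp hz
  constructor
  · rw [F1_eq, ← gg_zero n, div_mul_eq_mul_div, eq_div_iff (gg_zero_ne n)]
    exact step4 z hz
  · by_cases hzne : z = 0
    · subst hzne
      rw [F1_eq, F2_eq]
      have hn0 : n ≠ 0 := by omega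
      rw [zero_pow hn0, zero_pow (Nat.succ_ne_zero n)]
      ring
    · have hEqw := step7 z hz hzne
      have hin1 : HasDerivAt (fun w : ℂ => η*w*φ z) (η*1*φ z) 0 :=
        ((hasDerivAt_id (0:ℂ)).const_mul η).mul_const (φ z)
      have hout1 := gg_hasDerivAt n (x := η*(0:ℂ)*φ z) (by simp)
      have hLd : HasDerivAt (fun w : ℂ => gg n (η*φ 0*z) * gg n (η*w*φ z))
          (gg n (η*φ 0*z) * (gg (n+1) (η*(0:ℂ)*φ z) * (η*1*φ z))) 0 :=
        (hout1.comp 0 hin1).const_mul _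
      have hin2 : HasDerivAt (fun w : ℂ => η*φ 0*w) (η*φ 0*1) 0 :=
        (hasDerivAt_id (0:ℂ)).const_mul (η*φ 0)
      have hout2 := gg_hasDerivAt n (x := η*φ 0*(0:ℂ)) (by simp)
      have hin3 : HasDerivAt (fun w : ℂ => η*z*φ w) (η*z*deriv φ 0) 0 := by
        have := hφd.const_mul (η*z)
        simpa [mul_assoc] using this
      have hout3 := gg_hasDerivAt n (x := η*z*φ 0) (habs hzB hb1)
      have hRd : HasDerivAt (fun w : ℂ => gg n (η*φ 0*w) * gg n (η*z*φ w))
          ((gg (n+1) (η*φ 0*(0:ℂ)) * (η*φ 0*1)) * gg n (η*z*φ 0)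
            + gg n (η*φ 0*(0:ℂ)) * (gg (n+1) (η*z*φ 0) * (η*z*deriv φ 0))) 0 :=
        (hout2.comp 0 hin2).mul (by exact hout3.comp 0 hin3)
      have hEq0 : (fun w : ℂ => gg n (η*φ 0*w) * gg n (η*z*φ w))
          =ᶠ[nhds (0:ℂ)] (fun w : ℂ => gg n (η*φ 0*z) * gg n (η*w*φ z)) := by
        filter_upwards [hball0] with w hw
        exact (hEqw w hw).symm
      have hLd2 : HasDerivAt (fun w : ℂ => gg n (η*φ 0*w) * gg n (η*z*φ w))
          (gg n (η*φ 0*z) * (gg (n+1) (η*(0:ℂ)*φ z) * (η*1*φ z))) 0 :=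
        hLd.congr_of_eventuallyEq hEq0
      have E := hLd2.unique hRd
      simp only [mul_zero, zero_mul, mul_one] at E
      rw [show η*z*φ 0 = η*φ 0*z from by ring] at E
      rw [F1_eq, F2_eq]
      have hκ : gg n 0 = (((n:ℂ)+3)/((n:ℂ)+1)^2) * gg (n+1) 0 := by
        rw [gg_zero, gg_zero]
        exact kappa_eq n
      have hfin : (η * gg (n+1) 0) * (φ z * (z^n * gg n (η*φ 0*z)))
          = (η * gg (n+1) 0) * (φ 0 * (z^n * gg n (η*φ 0*z))
            + deriv φ 0 * (((n:ℂ)+3)/((n:ℂ)+1)^2) * (z^(n+1) * gg (n+1) (η*φ 0*z))) := by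
        linear_combination z^n * E
          + (η * deriv φ 0 * z^(n+1) * gg (n+1) (η*φ 0*z)) * hκ
      exact mul_left_cancel₀ (mul_ne_zero hη0 (gg_zero_ne (n+1))) hfin
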